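/- Assume p ∈ (0,1), m ≥ 2, and X, Y ∈ ℝ^{D×N} whose Gram matrices are isotropic: X Xᵀ = a I and Y Yᵀ = b I for positive scalars a, b. Fix α > 0 and define the teacher matrix Ω_T = α ((X Xᵀ)^{-1} x_1)((Y Yᵀ)^{-1} y_1)ᵀ, where x_1, y_1 are the first columns of X, Y. With query token r = Σ_i a_i x_i and key tokens s_j = Σ_i b_{j,i} y_i generated from i.i.d. Bernoulli(p) coefficients, and population objective L(Ω) = E[ −Σ_{j=1}^m p_T(j) log p_Ω(j) ] where p_Ω = softmax(rᵀΩ s_1,…,rᵀΩ s_m) and p_T = softmax(rᵀΩ_T s_1,…,rᵀΩ_T s_m), the unique global minimizer of L is Ω* = (α/(ab)) x_1 y_1ᵀ. In particular Ω* has rank 1 and its nonzero left and right singular vectors are parallel to x_1 and y_1 respectively. -/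

import Mathlib

open MeasureTheory ProbabilityTheory Matrix Finset

noncomputable def softmax {m : ℕ} (a : Fin m → ℝ) : Fin m → ℝ :=
  fun i => Real.exp (a i) / ∑ k, Real.exp (a k)

/-- cross-entropy of the student `M` against teacher `T`, at query `r` and keys `s`. -/
noncomputable def gfun {D m : ℕ} (T M : Matrix (Fin D) (Fin D) ℝ)
    (r : Fin D → ℝ) (s : Fin m → Fin D → ℝ) : ℝ :=
  -∑ j, softmax (fun j' => r ⬝ᵥ (T *ᵥ s j')) j *
    Real.log (softmax (fun j' => r ⬝ᵥ (M *ᵥ s j')) j)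
lemma softmax_denom_pos {m : ℕ} [NeZero m] (t : Fin m → ℝ) : 0 < ∑ k, Real.exp (t k) :=
  Finset.sum_pos (fun k _ => Real.exp_pos _)
    ⟨⟨0, Nat.pos_of_ne_zero (NeZero.ne m)⟩, Finset.mem_univ _⟩

lemma softmax_pos {m : ℕ} [NeZero m] (t : Fin m → ℝ) (j : Fin m) : 0 < softmax t j :=
  div_pos (Real.exp_pos _) (softmax_denom_pos t)

lemma softmax_sum_one {m : ℕ} [NeZero m] (t : Fin m → ℝ) : ∑ j, softmax t j = 1 := by
  unfold softmax
  rw [← Finset.sum_div]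
  exact div_self (softmax_denom_pos t).ne'

lemma gibbs_aux {m : ℕ} (p q : Fin m → ℝ) (hp : ∀ j, 0 < p j) (hq : ∀ j, 0 < q j)
    (hps : ∑ j, p j = 1) (hqs : ∑ j, q j = 1) :
    (∑ j, p j * Real.log (q j) ≤ ∑ j, p j * Real.log (p j)) ∧
    (∑ j, p j * Real.log (q j) = ∑ j, p j * Real.log (p j) → q = p) := by
  have key : ∀ j : Fin m, p j * Real.log (q j) - p j * Real.log (p j) ≤ q j - p j := by
    intro j
    have h1 : Real.log (q j / p j) ≤ q j / p j - 1 :=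
      Real.log_le_sub_one_of_pos (div_pos (hq j) (hp j))
    have h2 := mul_le_mul_of_nonneg_left h1 (hp j).le
    rw [Real.log_div (hq j).ne' (hp j).ne'] at h2
    have h3 : p j * (q j / p j - 1) = q j - p j := by
      rw [mul_sub, mul_div_cancel₀ _ (hp j).ne', mul_one]
    linarith [h2, h3.le]
  have keylt : ∀ j : Fin m, q j ≠ p j →
      p j * Real.log (q j) - p j * Real.log (p j) < q j - p j := by
    intro j hne
    have h1 : Real.log (q j / p j) < q j / p j - 1 :=
      Real.log_lt_sub_one_of_pos (div_pos (hq j) (hp j))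
        (by rw [Ne, div_eq_one_iff_eq (hp j).ne']; exact hne)
    have h2 := mul_lt_mul_of_pos_left h1 (hp j)
    rw [Real.log_div (hq j).ne' (hp j).ne'] at h2
    have h3 : p j * (q j / p j - 1) = q j - p j := by
      rw [mul_sub, mul_div_cancel₀ _ (hp j).ne', mul_one]
    nlinarith [h2]
  have hsum : ∑ j, (p j * Real.log (q j) - p j * Real.log (p j)) ≤ ∑ j, (q j - p j) :=
    Finset.sum_le_sum fun j _ => key j
  have hzero : ∑ j, (q j - p j) = 0 := by rw [Finset.sum_sub_distrib, hps, hqs]; ring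
  rw [Finset.sum_sub_distrib] at hsum
  constructor
  · linarith
  · intro heq
    by_contra hne
    obtain ⟨j0, hj0⟩ : ∃ j0, q j0 ≠ p j0 := by
      by_contra hall
      push_neg at hall
      exact hne (funext hall)
    have hlt : ∑ j, (p j * Real.log (q j) - p j * Real.log (p j)) < ∑ j, (q j - p j) :=
      Finset.sum_lt_sum (fun j _ => key j) ⟨j0, Finset.mem_univ _, keylt j0 hj0⟩
    rw [Finset.sum_sub_distrib] at hlt
    linarith

lemma gibbs_softmax {m : ℕ} [NeZero m] (t u : Fin m → ℝ) :
    ((-∑ j, softmax t j * Real.log (softmax t j)) ≤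
      -∑ j, softmax t j * Real.log (softmax u j)) ∧
    ((-∑ j, softmax t j * Real.log (softmax u j)) =
      (-∑ j, softmax t j * Real.log (softmax t j)) → softmax u = softmax t) := by
  obtain ⟨h1, h2⟩ := gibbs_aux (softmax t) (softmax u) (softmax_pos t) (softmax_pos u)
    (softmax_sum_one t) (softmax_sum_one u)
  exact ⟨neg_le_neg h1, fun h => h2 (by linarith [neg_injective h])⟩

lemma softmax_eq_diff {m : ℕ} [NeZero m] {t u : Fin m → ℝ} (h : softmax u = softmax t)
    (j j' : Fin m) : u j - u j' = t j - t j' := by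
  have hj := congrFun h j
  have hj' := congrFun h j'
  unfold softmax at hj hj'
  have hu := (softmax_denom_pos u).ne'
  have ht := (softmax_denom_pos t).ne'
  rw [div_eq_div_iff (softmax_denom_pos u).ne' (softmax_denom_pos t).ne'] at hj hj'
  have key : Real.exp (u j) * Real.exp (t j') = Real.exp (t j) * Real.exp (u j') := by
    apply mul_right_cancel₀ (mul_ne_zero hu ht)
    calc Real.exp (u j) * Real.exp (t j') * ((∑ k, Real.exp (u k)) * ∑ k, Real.exp (t k))
        = (Real.exp (u j) * ∑ k, Real.exp (t k)) *
          (Real.exp (t j') * ∑ k, Real.exp (u k)) := by ring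
      _ = (Real.exp (t j) * ∑ k, Real.exp (u k)) *
          (Real.exp (u j') * ∑ k, Real.exp (t k)) := by rw [hj, ← hj']
      _ = Real.exp (t j) * Real.exp (u j') * ((∑ k, Real.exp (u k)) * ∑ k, Real.exp (t k)) := by
          ring
  rw [← Real.exp_add, ← Real.exp_add, Real.exp_eq_exp] at key
  linarith

lemma bernoulli_fiber_ne_zero {Ω : Type*} [MeasurableSpace Ω] (μ : Measure Ω)
    [IsProbabilityMeasure μ] (v : Ω → ℝ) (hv : Measurable v)
    (h01 : ∀ ω, v ω = 0 ∨ v ω = 1) (p : ℝ) (hp : p ∈ Set.Ioo (0:ℝ) 1)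
    (hB : μ {ω | v ω = 1} = ENNReal.ofReal p) (c : ℝ) (hc : c = 0 ∨ c = 1) :
    μ (v ⁻¹' {c}) ≠ 0 := by
  have hone : v ⁻¹' {1} = {ω | v ω = 1} := rfl
  rcases hc with hc | hc
  · subst hc
    have hset : v ⁻¹' {0} = (v ⁻¹' {1})ᶜ := by
      ext ω
      simp only [Set.mem_preimage, Set.mem_singleton_iff, Set.mem_compl_iff]
      rcases h01 ω with h | h <;> simp [h]
    rw [hset, measure_compl (hv (measurableSet_singleton 1)) (measure_ne_top μ _), hone, hB,
      measure_univ]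
    intro habs
    rw [tsub_eq_zero_iff_le] at habs
    exact absurd (lt_of_lt_of_le (ENNReal.ofReal_lt_one.mpr hp.2) habs) (lt_irrefl _)
  · subst hc
    rw [hone, hB]
    exact (ENNReal.ofReal_pos.mpr hp.1).ne'

lemma gfun_self_le {D m : ℕ} [NeZero m] (T M : Matrix (Fin D) (Fin D) ℝ)
    (r : Fin D → ℝ) (s : Fin m → Fin D → ℝ) : gfun T T r s ≤ gfun T M r s :=
  (gibbs_softmax _ _).1

lemma gfun_eq_softmax {D m : ℕ} [NeZero m] {T M : Matrix (Fin D) (Fin D) ℝ}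
    {r : Fin D → ℝ} {s : Fin m → Fin D → ℝ} (h : gfun T M r s = gfun T T r s) :
    softmax (fun j' => r ⬝ᵥ (M *ᵥ s j')) = softmax (fun j' => r ⬝ᵥ (T *ᵥ s j')) :=
  (gibbs_softmax _ _).2 h

/-- **Exact alignment under isotropy.**
If the feature sets are in isotropic position (`X Xᵀ = a I`, `Y Yᵀ = b I` with `a, b > 0`),
the teacher is `Ω_T = α ((X Xᵀ)⁻¹ x₁)((Y Yᵀ)⁻¹ y₁)ᵀ` with `α > 0`, tokens are random
Bernoulli(p) sums of features with `p ∈ (0,1)` and `m ≥ 2` keys, then the unique global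
minimizer of the population cross-entropy objective `L` is `Ω* = (α/(ab)) x₁ y₁ᵀ` — a
rank-one matrix whose nonzero left/right singular vectors are parallel to `x₁`/`y₁`. -/
theorem exact_alignment_isotropy
    {Ω : Type*} [MeasurableSpace Ω] (μ : Measure Ω) [IsProbabilityMeasure μ]
    {N D m : ℕ} (hN : 1 ≤ N) (hm : 2 ≤ m) (p : ℝ) (hp : p ∈ Set.Ioo (0 : ℝ) 1)
    (x y : Fin N → Fin D → ℝ)
    (X : Matrix (Fin D) (Fin N) ℝ) (hX : X = Matrix.of fun k i => x i k)
    (Y : Matrix (Fin D) (Fin N) ℝ) (hY : Y = Matrix.of fun k i => y i k)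
    (aiso biso : ℝ) (haiso : 0 < aiso) (hbiso : 0 < biso)
    (hXiso : X * Xᵀ = aiso • (1 : Matrix (Fin D) (Fin D) ℝ))
    (hYiso : Y * Yᵀ = biso • (1 : Matrix (Fin D) (Fin D) ℝ))
    (α : ℝ) (hα : 0 < α)
    (OmT : Matrix (Fin D) (Fin D) ℝ)
    (hOmT : OmT = α • Matrix.vecMulVec
      ((X * Xᵀ)⁻¹ *ᵥ x ⟨0, by omega⟩) ((Y * Yᵀ)⁻¹ *ᵥ y ⟨0, by omega⟩))
    -- Bernoulli(p) coefficients, all mutually independent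
    (a : Fin N → Ω → ℝ) (b : Fin m → Fin N → Ω → ℝ)
    (hameas : ∀ i, Measurable (a i)) (hbmeas : ∀ j i, Measurable (b j i))
    (ha01 : ∀ i ω, a i ω = 0 ∨ a i ω = 1) (hb01 : ∀ j i ω, b j i ω = 0 ∨ b j i ω = 1)
    (haBer : ∀ i, μ {ω | a i ω = 1} = ENNReal.ofReal p)
    (hbBer : ∀ j i, μ {ω | b j i ω = 1} = ENNReal.ofReal p)
    (hindep : iIndepFun
      (Sum.elim (fun i => a i) (fun ji : Fin m × Fin N => b ji.1 ji.2) :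
        Fin N ⊕ Fin m × Fin N → Ω → ℝ) μ)
    -- tokens
    (r : Ω → Fin D → ℝ) (hr : r = fun ω k => ∑ i, a i ω * x i k)
    (s : Fin m → Ω → Fin D → ℝ) (hs : s = fun j ω k => ∑ i, b j i ω * y i k)
    -- population objective
    (L : Matrix (Fin D) (Fin D) ℝ → ℝ)
    (hL : ∀ Om : Matrix (Fin D) (Fin D) ℝ, L Om =
      ∫ ω, -∑ j, softmax (fun j' => r ω ⬝ᵥ (OmT *ᵥ s j' ω)) j *
        Real.log (softmax (fun j' => r ω ⬝ᵥ (Om *ᵥ s j' ω)) j) ∂μ)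
    (OmStar : Matrix (Fin D) (Fin D) ℝ)
    (hOmStar : OmStar = (α / (aiso * biso)) •
      Matrix.vecMulVec (x ⟨0, by omega⟩) (y ⟨0, by omega⟩)) :
    ∀ Om : Matrix (Fin D) (Fin D) ℝ, L OmStar ≤ L Om ∧ (L Om = L OmStar ↔ Om = OmStar) := by
  haveI : NeZero m := ⟨by omega⟩
  -- Step 1: OmT = OmStar
  have hXinv : (X * Xᵀ)⁻¹ = aiso⁻¹ • (1 : Matrix (Fin D) (Fin D) ℝ) := by
    rw [hXiso]
    apply Matrix.inv_eq_right_inv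
    rw [Matrix.smul_mul, Matrix.mul_smul, one_mul, smul_smul, mul_inv_cancel₀ haiso.ne',
      one_smul]
  have hYinv : (Y * Yᵀ)⁻¹ = biso⁻¹ • (1 : Matrix (Fin D) (Fin D) ℝ) := by
    rw [hYiso]
    apply Matrix.inv_eq_right_inv
    rw [Matrix.smul_mul, Matrix.mul_smul, one_mul, smul_smul, mul_inv_cancel₀ hbiso.ne',
      one_smul]
  have hEq : OmT = OmStar := by
    rw [hOmT, hOmStar, hXinv, hYinv, Matrix.smul_mulVec, Matrix.one_mulVec,
      Matrix.smul_mulVec, Matrix.one_mulVec]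
    ext k l
    simp only [Matrix.smul_apply, Matrix.vecMulVec_apply, Pi.smul_apply, smul_eq_mul]
    field_simp
  -- Step 2: measurability & integrability of the integrand
  have hrmeas : ∀ k, Measurable fun ω => r ω k := by
    intro k; rw [hr]; exact Finset.measurable_sum _ fun i _ => (hameas i).mul_const _
  have hsmeas : ∀ j l, Measurable fun ω => s j ω l := by
    intro j l; rw [hs]; exact Finset.measurable_sum _ fun i _ => (hbmeas j i).mul_const _
  have hdot : ∀ (M : Matrix (Fin D) (Fin D) ℝ) (j : Fin m),
      Measurable fun ω => r ω ⬝ᵥ (M *ᵥ s j ω) := by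
    intro M j
    simp only [dotProduct, Matrix.mulVec]
    exact Finset.measurable_sum _ fun k _ =>
      (hrmeas k).mul (Finset.measurable_sum _ fun l _ => ((hsmeas j l).const_mul _))
  have hsm : ∀ (M : Matrix (Fin D) (Fin D) ℝ) (j : Fin m),
      Measurable fun ω => softmax (fun j' => r ω ⬝ᵥ (M *ᵥ s j' ω)) j := by
    intro M j
    unfold softmax
    exact (Real.measurable_exp.comp (hdot M j)).div
      (Finset.measurable_sum _ fun k _ => Real.measurable_exp.comp (hdot M k))
  have hgmeas : ∀ M : Matrix (Fin D) (Fin D) ℝ,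
      Measurable fun ω => gfun OmT M (r ω) (fun j => s j ω) := by
    intro M
    unfold gfun
    exact (Finset.measurable_sum _ fun j _ =>
      ((hsm OmT j).mul (Real.measurable_log.comp (hsm M j)))).neg
  have hbound : ∀ M : Matrix (Fin D) (Fin D) ℝ, ∃ C : ℝ, ∀ ω,
      |gfun OmT M (r ω) (fun j => s j ω)| ≤ C := by
    intro M
    classical
    set G : (Fin N → ℝ) × (Fin m → Fin N → ℝ) → ℝ := fun v =>
      gfun OmT M (fun k => ∑ i, v.1 i * x i k) (fun j l => ∑ i, v.2 j i * y i l) with hG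
    have hrep : ∀ ω, gfun OmT M (r ω) (fun j => s j ω)
        = G (fun i => a i ω, fun j i => b j i ω) := by
      intro ω
      simp only [hG, hr, hs]
    have hSfin : ((Set.pi Set.univ fun _ : Fin N => ({0,1} : Set ℝ)) ×ˢ
        (Set.pi Set.univ fun _ : Fin m => Set.pi Set.univ fun _ : Fin N =>
          ({0,1} : Set ℝ))).Finite :=
      Set.Finite.prod (Set.Finite.pi fun _ => Set.toFinite _)
        (Set.Finite.pi fun _ => Set.Finite.pi fun _ => Set.toFinite _)
    have hsub : Set.range (fun ω => gfun OmT M (r ω) (fun j => s j ω)) ⊆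
        G '' ((Set.pi Set.univ fun _ : Fin N => ({0,1} : Set ℝ)) ×ˢ
        (Set.pi Set.univ fun _ : Fin m => Set.pi Set.univ fun _ : Fin N =>
          ({0,1} : Set ℝ))) := by
      rintro z ⟨ω, rfl⟩
      refine ⟨(fun i => a i ω, fun j i => b j i ω), ⟨?_, ?_⟩, (hrep ω).symm⟩
      · intro i _
        rcases ha01 i ω with h | h <;> simp [h]
      · intro j _
        intro i _
        rcases hb01 j i ω with h | h <;> simp [h]
    have hfin : (Set.range fun ω => gfun OmT M (r ω) (fun j => s j ω)).Finite :=
      (hSfin.image G).subset hsub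
    obtain ⟨C, hC⟩ := (hfin.image fun z => |z|).bddAbove
    exact ⟨C, fun ω => hC ⟨_, ⟨ω, rfl⟩, rfl⟩⟩
  have hint : ∀ M : Matrix (Fin D) (Fin D) ℝ,
      Integrable (fun ω => gfun OmT M (r ω) (fun j => s j ω)) μ := by
    intro M
    obtain ⟨C, hC⟩ := hbound M
    exact (integrable_const C).mono' (hgmeas M).aestronglyMeasurable
      (Filter.Eventually.of_forall fun ω => by simpa [Real.norm_eq_abs] using hC ω)
  have hLg : ∀ M : Matrix (Fin D) (Fin D) ℝ,
      L M = ∫ ω, gfun OmT M (r ω) (fun j => s j ω) ∂μ := by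
    intro M; rw [hL]; simp only [gfun]
  intro Om
  have hle : L OmStar ≤ L Om := by
    rw [hLg, hLg, ← hEq]
    exact integral_mono (hint OmT) (hint Om) fun ω => gfun_self_le _ _ _ _
  refine ⟨hle, ⟨fun hLeq => ?_, fun h => by rw [h]⟩⟩
  -- Step 3: equality implies Om = OmStar
  have h0 : ∫ ω, (gfun OmT Om (r ω) (fun j => s j ω)
      - gfun OmT OmT (r ω) (fun j => s j ω)) ∂μ = 0 := by
    rw [integral_sub (hint Om) (hint OmT), ← hLg, ← hLg, hLeq, ← hEq, sub_self]
  have haeA : μ {ω | ¬ gfun OmT Om (r ω) (fun j => s j ω)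
      = gfun OmT OmT (r ω) (fun j => s j ω)} = 0 := by
    have hae := (integral_eq_zero_iff_of_nonneg
      (fun ω => sub_nonneg.2 (gfun_self_le OmT Om (r ω) (fun j => s j ω)))
      ((hint Om).sub (hint OmT))).mp h0
    have : ∀ᵐ ω ∂μ, gfun OmT Om (r ω) (fun j => s j ω)
        = gfun OmT OmT (r ω) (fun j => s j ω) := by
      filter_upwards [hae] with ω hω
      exact sub_eq_zero.mp hω
    rwa [MeasureTheory.ae_iff] at this
  have hentry : ∀ i0 i1 : Fin N, x i0 ⬝ᵥ ((Om - OmT) *ᵥ y i1) = 0 := by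
    intro i0 i1
    classical
    have hj01 : (⟨0, by omega⟩ : Fin m) ≠ ⟨1, by omega⟩ := by
      intro h
      simpa using congrArg Fin.val h
    set target : Fin N ⊕ Fin m × Fin N → ℝ :=
      Sum.elim (fun i => if i = i0 then 1 else 0)
        (fun ji => if ji = ((⟨1, by omega⟩ : Fin m), i1) then 1 else 0) with htarget
    have hE : μ (⋂ t, (Sum.elim (fun i => a i)
        (fun ji : Fin m × Fin N => b ji.1 ji.2) t) ⁻¹' {target t})
        = ∏ t, μ ((Sum.elim (fun i => a i)
        (fun ji : Fin m × Fin N => b ji.1 ji.2) t) ⁻¹' {target t}) :=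
      hindep.meas_iInter fun t => ⟨{target t}, measurableSet_singleton _, rfl⟩
    have hne : μ (⋂ t, (Sum.elim (fun i => a i)
        (fun ji : Fin m × Fin N => b ji.1 ji.2) t) ⁻¹' {target t}) ≠ 0 := by
      rw [hE, Finset.prod_ne_zero_iff]
      intro t _
      rcases t with i | ji
      · exact bernoulli_fiber_ne_zero μ (a i) (hameas i) (ha01 i) p hp (haBer i) _
          (by by_cases h : i = i0 <;> simp [h, htarget])
      · exact bernoulli_fiber_ne_zero μ (b ji.1 ji.2) (hbmeas ji.1 ji.2) (hb01 ji.1 ji.2)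
          p hp (hbBer ji.1 ji.2) _
          (by by_cases h : ji = ((⟨1, by omega⟩ : Fin m), i1) <;> simp [h, htarget])
    obtain ⟨ω, hωE, hωA⟩ : ∃ ω, ω ∈ (⋂ t, (Sum.elim (fun i => a i)
        (fun ji : Fin m × Fin N => b ji.1 ji.2) t) ⁻¹' {target t}) ∧
        gfun OmT Om (r ω) (fun j => s j ω) = gfun OmT OmT (r ω) (fun j => s j ω) := by
      by_contra hcon
      push_neg at hcon
      apply hne
      refine le_antisymm (le_trans (measure_mono ?_) haeA.le) zero_le
      intro ω hω
      exact hcon ω hω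
    have ha' : ∀ i, a i ω = if i = i0 then 1 else 0 := by
      intro i
      have := Set.mem_iInter.mp hωE (Sum.inl i)
      simpa [htarget] using this
    have hb' : ∀ j i, b j i ω = if (j, i) = ((⟨1, by omega⟩ : Fin m), i1) then 1 else 0 := by
      intro j i
      have := Set.mem_iInter.mp hωE (Sum.inr (j, i))
      simpa [htarget] using this
    have hrω : r ω = x i0 := by
      funext k
      simp [hr, ha', ite_mul]
    have hs0 : s ⟨0, by omega⟩ ω = 0 := by
      funext l
      simp [hs, hb', Prod.ext_iff, hj01]
    have hs1 : s ⟨1, by omega⟩ ω = y i1 := by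
      funext l
      simp [hs, hb', Prod.ext_iff, ite_mul]
    have hsmeq := gfun_eq_softmax hωA
    have hdiff := softmax_eq_diff hsmeq (⟨1, by omega⟩ : Fin m) (⟨0, by omega⟩ : Fin m)
    simp only [hrω, hs0, hs1, Matrix.mulVec_zero, dotProduct_zero, sub_zero] at hdiff
    rw [Matrix.sub_mulVec, dotProduct_sub, sub_eq_zero]
    exact hdiff
  -- Step 4: matrix algebra
  have hmat : Xᵀ * (Om - OmT) * Y = 0 := by
    ext i0 i1
    have h := hentry i0 i1
    simp only [dotProduct, Matrix.mulVec, Matrix.mul_apply, Matrix.transpose_apply,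
      Matrix.zero_apply, hX, hY, Matrix.of_apply, Finset.mul_sum, Finset.sum_mul] at h ⊢
    rw [Finset.sum_comm]
    rw [← h]
    apply Finset.sum_congr rfl; intro k _
    apply Finset.sum_congr rfl; intro l _
    ring
  have hzero : Om - OmT = 0 := by
    have h2 : X * (Xᵀ * (Om - OmT) * Y) * Yᵀ = 0 := by
      rw [hmat, Matrix.mul_zero, Matrix.zero_mul]
    have h3 : (X * Xᵀ) * (Om - OmT) * (Y * Yᵀ) = 0 := by
      rw [← h2]; simp only [Matrix.mul_assoc]
    rw [hXiso, hYiso, Matrix.smul_mul, Matrix.mul_smul, one_mul, Matrix.mul_one,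
      smul_smul] at h3
    have := (smul_eq_zero.mp h3).resolve_left
      (mul_ne_zero hbiso.ne' haiso.ne')
    exact this
  rw [← hEq, ← sub_eq_zero]
  exact hzero
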